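/- The topological complexity of a space X satisfies TC(X) ≤ 2·cat(X) − 1, where cat denotes the (non-normalized) Lusternik–Schnirelmann category. -/

import Mathlib

open Set unitInterval

universe u v

/-- A motion planner on a subset `U ⊆ X × X`: a continuous choice of paths
joining the two coordinates of each point of `U`. -/
def IsMotionPlanner {X : Type u} [TopologicalSpace X] (U : Set (X × X))
    (s : C(U, C(unitInterval, X))) : Prop :=
  ∀ z : U, ((s z) 0, (s z) 1) = (z : X × X)

/-- `X × X` admits an open cover by `n` sets, each admitting a continuous section of
the path fibration `p : X^I → X × X`, `p(α) = (α 0, α 1)`. -/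
def TCCover (X : Type u) [TopologicalSpace X] (n : ℕ) : Prop :=
  ∃ U : Fin n → Set (X × X),
    (∀ i, IsOpen (U i)) ∧ (∀ z : X × X, ∃ i, z ∈ U i) ∧
      ∀ i, ∃ s : C(U i, C(unitInterval, X)), IsMotionPlanner (U i) s

/-- (Non-normalized) topological complexity of Farber. -/
noncomputable def topologicalComplexity (X : Type u) [TopologicalSpace X] : ℕ :=
  sInf {n | TCCover X n}

/-- Monoidal version: each set contains the diagonal and the sections are constant paths
on the diagonal. -/
def TCMCover (X : Type u) [TopologicalSpace X] (n : ℕ) : Prop :=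
  ∃ U : Fin n → Set (X × X),
    (∀ i, IsOpen (U i)) ∧ (∀ i (x : X), (x, x) ∈ U i) ∧ (∀ z : X × X, ∃ i, z ∈ U i) ∧
      ∀ i, ∃ s : C(U i, C(unitInterval, X)), IsMotionPlanner (U i) s ∧
        ∀ (x : X) (h : (x, x) ∈ U i), s ⟨(x, x), h⟩ = ContinuousMap.const unitInterval x

/-- Monoidal topological complexity of Iwase–Sakai (non-normalized). -/
noncomputable def monoidalTC (X : Type u) [TopologicalSpace X] : ℕ :=
  sInf {n | TCMCover X n}

/-- `X` admits an open cover by `n` sets, each contractible in `X`. -/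
def catCover (X : Type u) [TopologicalSpace X] (n : ℕ) : Prop :=
  ∃ U : Fin n → Set X,
    (∀ i, IsOpen (U i)) ∧ (∀ x : X, ∃ i, x ∈ U i) ∧
      ∀ i, ∃ x₀ : X, ContinuousMap.Homotopic
        (⟨Subtype.val, continuous_subtype_val⟩ : C(U i, X)) (ContinuousMap.const (U i) x₀)

/-- Non-normalized Lusternik–Schnirelmann category (`LScat pt = 1`). -/
noncomputable def LScat (X : Type u) [TopologicalSpace X] : ℕ :=
  sInf {n | catCover X n}

/-- `X` is `q`-connected: path-connected with trivial homotopy groups `π_k` for `1 ≤ k ≤ q`. -/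
def IsQConnected (X : Type u) [TopologicalSpace X] (q : ℕ) : Prop :=
  PathConnectedSpace X ∧
    ∀ k : ℕ, 1 ≤ k → k ≤ q → ∀ x : X, Subsingleton (HomotopyGroup (Fin k) X x)

/-- `X` carries a CW-structure all of whose cells have dimension at most `m`:
there are characteristic maps from closed euclidean balls whose open-cell images cover `X`
injectively, cell boundaries attach to cells of lower dimension, no cells above dimension `m`,
and `X` has the weak topology determined by the cells. -/
def IsCWComplexOfDimLE (X : Type u) [TopologicalSpace X] (m : ℕ) : Prop :=
  ∃ (cells : ℕ → Type) (Φ : ∀ n, cells n →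
      C((Metric.closedBall (0 : EuclideanSpace ℝ (Fin n)) 1 :
          Set (EuclideanSpace ℝ (Fin n))), X)),
    (∀ n, m < n → IsEmpty (cells n)) ∧
    (∀ x : X, ∃ n, ∃ i : cells n,
        ∃ b : (Metric.closedBall (0 : EuclideanSpace ℝ (Fin n)) 1 :
            Set (EuclideanSpace ℝ (Fin n))),
          ‖(b : EuclideanSpace ℝ (Fin n))‖ < 1 ∧ Φ n i b = x) ∧
    (∀ n (i : cells n), Set.InjOn (Φ n i) {b | ‖(b : EuclideanSpace ℝ (Fin n))‖ < 1}) ∧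
    (∀ n (i : cells n)
        (b : (Metric.closedBall (0 : EuclideanSpace ℝ (Fin n)) 1 :
            Set (EuclideanSpace ℝ (Fin n)))),
        ‖(b : EuclideanSpace ℝ (Fin n))‖ = 1 →
        ∃ k, k < n ∧ ∃ j : cells k,
          ∃ b' : (Metric.closedBall (0 : EuclideanSpace ℝ (Fin k)) 1 :
              Set (EuclideanSpace ℝ (Fin k))),
            Φ k j b' = Φ n i b) ∧
    (∀ A : Set X, (∀ n (i : cells n), IsClosed ((Φ n i) ⁻¹' A)) → IsClosed A)

lemma planner_prod {X : Type u} [TopologicalSpace X] {A B : Set X} {x₀ x₁ : X}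
    (γ : Path x₀ x₁)
    (F : C(unitInterval × A, X)) (hF0 : ∀ a : A, F (0, a) = a) (hF1 : ∀ a : A, F (1, a) = x₀)
    (G : C(unitInterval × B, X)) (hG0 : ∀ b : B, G (0, b) = b) (hG1 : ∀ b : B, G (1, b) = x₁) :
    ∃ s : C(↥(A ×ˢ B), C(unitInterval, X)), IsMotionPlanner (A ×ˢ B) s := by
  set π : ℝ → unitInterval := projIcc 0 1 zero_le_one with hπ
  have hπc : Continuous π := continuous_projIcc
  have hπ0 : ∀ r : ℝ, r ≤ 0 → π r = 0 := fun r hr => by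
    rw [hπ, projIcc_of_le_left _ hr]; rfl
  have hπ1 : ∀ r : ℝ, 1 ≤ r → π r = 1 := fun r hr => by
    rw [hπ, projIcc_of_right_le _ hr]; rfl
  set uA : ↥(A ×ˢ B) → A := fun z => ⟨z.1.1, z.2.1⟩ with huA
  set uB : ↥(A ×ˢ B) → B := fun z => ⟨z.1.2, z.2.2⟩ with huB
  have huAc : Continuous uA :=
    (continuous_fst.comp continuous_subtype_val).subtype_mk _
  have huBc : Continuous uB :=
    (continuous_snd.comp continuous_subtype_val).subtype_mk _
  set φ : ↥(A ×ˢ B) × unitInterval → X := fun p =>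
    if (p.2 : ℝ) ≤ 1/3 then F (π (3 * p.2), uA p.1)
    else if (p.2 : ℝ) ≤ 2/3 then γ.extend (3 * p.2 - 1)
    else G (π (3 - 3 * p.2), uB p.1) with hφ
  have hc1 : Continuous fun p : ↥(A ×ˢ B) × unitInterval => F (π (3 * p.2), uA p.1) :=
    F.continuous.comp ((hπc.comp (by fun_prop)).prodMk (huAc.comp continuous_fst))
  have hc2 : Continuous fun p : ↥(A ×ˢ B) × unitInterval => γ.extend (3 * p.2 - 1) :=
    γ.continuous_extend.comp (by fun_prop)
  have hc3 : Continuous fun p : ↥(A ×ˢ B) × unitInterval => G (π (3 - 3 * p.2), uB p.1) :=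
    G.continuous.comp ((hπc.comp (by fun_prop)).prodMk (huBc.comp continuous_fst))
  have hφc : Continuous φ := by
    refine Continuous.if_le hc1 ?_ (continuous_subtype_val.comp continuous_snd)
      continuous_const ?_
    · refine Continuous.if_le hc2 hc3 (continuous_subtype_val.comp continuous_snd)
        continuous_const ?_
      intro p hp
      have hp' : (p.2 : ℝ) = 2/3 := hp
      rw [show (3 : ℝ) * p.2 - 1 = 1 by rw [hp']; ring,
        show (3 : ℝ) - 3 * p.2 = 1 by rw [hp']; ring, hπ1 1 le_rfl, Path.extend_one, hG1]
    · intro p hp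
      have hp' : (p.2 : ℝ) = 1/3 := hp
      rw [show (3 : ℝ) * p.2 = 1 by rw [hp']; ring, hπ1 1 le_rfl, hF1,
        if_pos (by rw [hp']; norm_num : (p.2 : ℝ) ≤ 2/3),
        show (1 : ℝ) - 1 = 0 by ring, Path.extend_zero]
  refine ⟨ContinuousMap.curry ⟨φ, hφc⟩, fun z => ?_⟩
  have h0 : φ (z, 0) = (z : X × X).1 := by
    rw [hφ]
    simp only
    rw [if_pos (by norm_num : (((0 : unitInterval)) : ℝ) ≤ 1/3),
      show (3 : ℝ) * ((0 : unitInterval) : ℝ) = 0 by norm_num, hπ0 0 le_rfl, hF0]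
  have h1 : φ (z, 1) = (z : X × X).2 := by
    rw [hφ]
    simp only
    rw [if_neg (by norm_num : ¬ (((1 : unitInterval)) : ℝ) ≤ 1/3),
      if_neg (by norm_num : ¬ (((1 : unitInterval)) : ℝ) ≤ 2/3),
      show (3 : ℝ) - 3 * ((1 : unitInterval) : ℝ) = 0 by norm_num, hπ0 0 le_rfl, hG0]
  exact Prod.ext h0 h1

lemma planner_union {X : Type u} [TopologicalSpace X] [Nonempty X] {ι : Type*}
    (O : ι → Set (X × X)) (ho : ∀ i, IsOpen (O i))
    (hdisj : ∀ i j, i ≠ j → Disjoint (O i) (O j))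
    (hpl : ∀ i, ∃ s : C(↥(O i), C(unitInterval, X)), IsMotionPlanner (O i) s) :
    ∃ s : C(↥(⋃ i, O i), C(unitInterval, X)), IsMotionPlanner (⋃ i, O i) s := by
  classical
  choose sp hsp using hpl
  set junk : C(unitInterval, X) := ContinuousMap.const _ (Classical.arbitrary X) with hjunk
  set f : X × X → C(unitInterval, X) := fun z =>
    if h : z ∈ ⋃ i, O i then
      sp (mem_iUnion.1 h).choose ⟨z, (mem_iUnion.1 h).choose_spec⟩
    else junk with hfdef
  have key : ∀ i, ∀ z (hz : z ∈ O i), f z = sp i ⟨z, hz⟩ := by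
    intro i z hz
    have hu : z ∈ ⋃ i, O i := mem_iUnion.2 ⟨i, hz⟩
    set j := (mem_iUnion.1 hu).choose with hj
    have hzj : z ∈ O j := (mem_iUnion.1 hu).choose_spec
    have hij : j = i := by
      by_contra hne
      exact (hdisj j i hne).le_bot ⟨hzj, hz⟩
    rw [hfdef]
    simp only [dif_pos hu]
    subst hij
    rfl
  have hcont : ∀ z ∈ ⋃ i, O i, ContinuousAt f z := by
    intro z hz
    obtain ⟨i, hzi⟩ := mem_iUnion.1 hz
    have hres : ContinuousOn f (O i) := by
      rw [continuousOn_iff_continuous_domRestrict]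
      have : (O i).domRestrict f = fun w : ↥(O i) => sp i w := by
        funext w
        rw [Set.domRestrict_apply, key i w.1 w.2]
      rw [this]
      exact (sp i).continuous
    exact hres.continuousAt ((ho i).mem_nhds hzi)
  refine ⟨⟨(⋃ i, O i).domRestrict f, ?_⟩, ?_⟩
  · rw [← continuousOn_iff_continuous_restrict]
    exact fun z hz => (hcont z hz).continuousWithinAt
  · intro z
    obtain ⟨i, hzi⟩ := mem_iUnion.1 z.2
    show ((f z.1) 0, (f z.1) 1) = (z : X × X)
    rw [key i z.1 hzi]
    exact hsp i ⟨z.1, hzi⟩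

lemma tcCover_catCover {X : Type u} [TopologicalSpace X] [Nonempty X] {n : ℕ}
    (h : TCCover X n) : catCover X n := by
  classical
  obtain ⟨U, hUo, hUc, hUs⟩ := h
  set x₀ : X := Classical.arbitrary X with hx₀
  refine ⟨fun i => {x | (x₀, x) ∈ U i}, fun i => ?_, fun x => ?_, fun i => ?_⟩
  · exact (hUo i).preimage (Continuous.prodMk continuous_const continuous_id)
  · exact hUc (x₀, x)
  · obtain ⟨s, hs⟩ := hUs i
    set V : Set X := {x | (x₀, x) ∈ U i} with hV
    set g : ↥V → ↥(U i) := fun x => ⟨(x₀, x.1), x.2⟩ with hg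
    have hgc : Continuous g := (continuous_const.prodMk continuous_subtype_val).subtype_mk _
    set H : unitInterval × ↥V → X := fun p => s (g p.2) (σ p.1) with hH
    have hHc : Continuous H := by
      have : Continuous fun p : unitInterval × ↥V => ((s (g p.2) : C(unitInterval, X)), σ p.1) :=
        (s.continuous.comp (hgc.comp continuous_snd)).prodMk
          (continuous_symm.comp continuous_fst)
      exact continuous_eval.comp this
    refine ⟨x₀, ⟨⟨⟨H, hHc⟩, fun x => ?_, fun x => ?_⟩⟩⟩
    · show s (g x) (σ 0) = x.1
      rw [symm_zero]
      exact congrArg Prod.snd (hs (g x))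
    · show s (g x) (σ 1) = x₀
      rw [symm_one]
      exact congrArg Prod.fst (hs (g x))

lemma catCover_to_tcCover {X : Type u} [TopologicalSpace X] [PathConnectedSpace X]
    [NormalSpace X] {n : ℕ} (h : catCover X n) : TCCover X (2 * n - 1) := by
  classical
  haveI : Nonempty X := PathConnectedSpace.nonempty
  obtain ⟨U, hUo, hUc, hUcat⟩ := h
  have hn : 1 ≤ n := (hUc (Classical.arbitrary X)).choose.pos
  obtain ⟨f, hf⟩ := BumpCovering.exists_isSubordinate_of_locallyFinite isClosed_univ U hUo
    (locallyFinite_of_finite _) (fun x _ => mem_iUnion.2 (hUc x))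
  -- thresholds
  set t : Fin (2 * n - 1) → ℝ := fun k => ((k : ℕ) + 1) / (2 * n) with ht
  have htpos : ∀ k, 0 < t k := fun k => by
    apply div_pos (by positivity) (by positivity)
  have htlt : ∀ k, t k < 1 := by
    intro k
    rw [ht, div_lt_one (by positivity : (0:ℝ) < 2 * n)]
    have : (k : ℕ) < 2 * n - 1 := k.2
    have : ((k : ℕ) : ℝ) < 2 * n - 1 := by
      have h2 : (1:ℝ) ≤ 2 * n := by exact_mod_cast Nat.one_le_iff_ne_zero.2 (by omega)
      calc ((k : ℕ) : ℝ) < ((2 * n - 1 : ℕ) : ℝ) := by exact_mod_cast k.2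
        _ ≤ 2 * (n:ℝ) - 1 := by push_cast [Nat.cast_sub (by omega : 1 ≤ 2 * n)]; ring_nf; rfl
    linarith
  have htinj : Function.Injective t := by
    intro k k' hkk
    rw [ht] at hkk
    have h2 : (0:ℝ) < 2 * n := by positivity
    field_simp at hkk
    exact Fin.ext (by exact_mod_cast (by linarith : ((k : ℕ) : ℝ) = k'))
  -- pieces
  set P : Fin (2 * n - 1) → Finset (Fin n) → Set X := fun k S =>
    {x | (∀ i ∈ S, t k < f i x) ∧ ∀ j ∉ S, f j x < t k} with hP
  have hPopen : ∀ k S, IsOpen (P k S) := by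
    intro k S
    have hrw : P k S = (⋂ i ∈ S, {x | t k < f i x}) ∩ ⋂ j ∈ Sᶜ, {x | f j x < t k} := by
      ext x
      simp [hP, Finset.mem_compl]
    rw [hrw]
    exact (isOpen_biInter_finset fun i _ => isOpen_lt continuous_const (f i).continuous).inter
      (isOpen_biInter_finset fun j _ => isOpen_lt (f j).continuous continuous_const)
  have hPsub : ∀ k S, ∀ i ∈ S, P k S ⊆ U i := by
    intro k S i hi x hx
    refine hf i (subset_tsupport _ (Function.mem_support.2 ?_))
    exact ne_of_gt (lt_trans (htpos k) (hx.1 i hi))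
  have hPdisj : ∀ k, ∀ S T : Finset (Fin n), S ≠ T → Disjoint (P k S) (P k T) := by
    intro k S T hST
    rw [Set.disjoint_left]
    intro x hxS hxT
    rcases Finset.not_subset.1 (fun hsub => hST (Finset.Subset.antisymm hsub (by
      intro j hj
      by_contra hjS
      exact absurd (hxT.1 j hj) (not_lt.2 (le_of_lt (hxS.2 j hjS))))) : ¬ S ⊆ T) with ⟨i, hiS, hiT⟩
    exact absurd (hxS.1 i hiS) (not_lt.2 (le_of_lt (hxT.2 i hiT)))
  -- coverage counting
  have key : ∀ x : X, ∃ K : Finset (Fin (2 * n - 1)), n ≤ K.card ∧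
      ∀ k ∈ K, ∃ S : Finset (Fin n), S.Nonempty ∧ x ∈ P k S := by
    intro x
    set i₀ := f.ind x (mem_univ x) with hi₀def
    have hi₀ : f i₀ x = 1 := f.ind_apply x (mem_univ x)
    set bad : Finset (Fin (2 * n - 1)) :=
      Finset.univ.filter (fun k => ∃ i, f i x = t k) with hbad
    have hbadcard : bad.card ≤ n - 1 := by
      have hinj : ∀ k ∈ bad, ∃ i : Fin n, f i x = t k := by
        intro k hk
        exact (Finset.mem_filter.1 hk).2
      choose g hg using hinj
      have hginj : ∀ k (hk : k ∈ bad), ∀ k' (hk' : k' ∈ bad),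
          g k hk = g k' hk' → k = k' := by
        intro k hk k' hk' hgg
        apply htinj
        rw [← hg k hk, hgg, hg k' hk']
      have hgne : ∀ k (hk : k ∈ bad), g k hk ≠ i₀ := by
        intro k hk hgi
        have := hg k hk
        rw [hgi, hi₀] at this
        exact absurd this.symm (ne_of_lt (htlt k))
      have : bad.card ≤ (Finset.univ.erase i₀).card := by
        apply Finset.card_le_card_of_injOn (fun k => if hk : k ∈ bad then g k hk else i₀)
        · intro k hk
          simp only [Finset.mem_coe] at hk ⊢; rw [dif_pos hk]
          exact Finset.mem_erase.2 ⟨hgne k hk, Finset.mem_univ _⟩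
        · intro k hk k' hk' hkk
          simp only [Finset.mem_coe] at hk hk'
          simp only [dif_pos hk, dif_pos hk'] at hkk
          exact hginj k hk k' hk' hkk
      rw [Finset.card_erase_of_mem (Finset.mem_univ _), Finset.card_univ, Fintype.card_fin] at this
      exact this
    refine ⟨badᶜ, ?_, ?_⟩
    · have h1 : badᶜ.card = (2 * n - 1) - bad.card := by
        rw [Finset.card_compl, Fintype.card_fin]
      omega
    · intro k hk
      rw [Finset.mem_compl, hbad, Finset.mem_filter, not_and] at hk
      have hne : ∀ i, f i x ≠ t k := by
        intro i hi
        exact hk (Finset.mem_univ k) ⟨i, hi⟩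
      refine ⟨Finset.univ.filter (fun i => t k < f i x), ⟨i₀, ?_⟩, ?_, ?_⟩
      · exact Finset.mem_filter.2 ⟨Finset.mem_univ _, by rw [hi₀]; exact htlt k⟩
      · intro i hi
        exact (Finset.mem_filter.1 hi).2
      · intro j hj
        rw [Finset.mem_filter, not_and] at hj
        have := hj (Finset.mem_univ j)
        rcases lt_or_eq_of_le (not_lt.1 this) with h | h
        · exact h
        · exact absurd h (hne j)
  -- planner on each piece product
  have hplan : ∀ k, ∀ S T : Finset (Fin n), S.Nonempty → T.Nonempty →
      ∃ s : C(↥(P k S ×ˢ P k T), C(unitInterval, X)), IsMotionPlanner (P k S ×ˢ P k T) s := by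
    intro k S T hS hT
    obtain ⟨i, hi⟩ := hS
    obtain ⟨j, hj⟩ := hT
    obtain ⟨a, ⟨FA⟩⟩ := hUcat i
    obtain ⟨b, ⟨FB⟩⟩ := hUcat j
    set incS : C(↥(P k S), ↥(U i)) :=
      ⟨Set.inclusion (hPsub k S i hi), continuous_inclusion _⟩ with hincS
    set incT : C(↥(P k T), ↥(U j)) :=
      ⟨Set.inclusion (hPsub k T j hj), continuous_inclusion _⟩ with hincT
    refine planner_prod ((PathConnectedSpace.joined a b).somePath)
      (FA.toContinuousMap.comp ((ContinuousMap.id unitInterval).prodMap incS)) ?_ ?_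
      (FB.toContinuousMap.comp ((ContinuousMap.id unitInterval).prodMap incT)) ?_ ?_
    · intro w
      show FA (0, incS w) = (w : X)
      rw [FA.apply_zero]
      rfl
    · intro w
      show FA (1, incS w) = a
      rw [FA.apply_one]
      rfl
    · intro w
      show FB (0, incT w) = (w : X)
      rw [FB.apply_zero]
      rfl
    · intro w
      show FB (1, incT w) = b
      rw [FB.apply_one]
      rfl
  -- assemble
  set Idx : Type := {q : Finset (Fin n) × Finset (Fin n) // q.1.Nonempty ∧ q.2.Nonempty}
    with hIdx
  refine ⟨fun k => ⋃ q : Idx, P k q.1.1 ×ˢ P k q.1.2, fun k => ?_, fun z => ?_, fun k => ?_⟩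
  · exact isOpen_iUnion fun q => (hPopen _ _).prod (hPopen _ _)
  · obtain ⟨K₁, hK₁, hx⟩ := key z.1
    obtain ⟨K₂, hK₂, hy⟩ := key z.2
    have hinter : (K₁ ∩ K₂).Nonempty := by
      rw [← Finset.card_pos]
      have h1 := Finset.card_union_add_card_inter K₁ K₂
      have h2 : (K₁ ∪ K₂).card ≤ 2 * n - 1 := by
        have := Finset.card_le_univ (K₁ ∪ K₂)
        rwa [Fintype.card_fin] at this
      omega
    obtain ⟨k, hk⟩ := hinter
    rw [Finset.mem_inter] at hk
    obtain ⟨S, hSne, hxS⟩ := hx k hk.1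
    obtain ⟨T, hTne, hyT⟩ := hy k hk.2
    exact ⟨k, mem_iUnion.2 ⟨⟨(S, T), hSne, hTne⟩, hxS, hyT⟩⟩
  · apply planner_union
    · intro q
      exact (hPopen _ _).prod (hPopen _ _)
    · intro q q' hqq
      have hne : q.1.1 ≠ q'.1.1 ∨ q.1.2 ≠ q'.1.2 := by
        by_contra hcon
        push_neg at hcon
        exact hqq (Subtype.ext (Prod.ext hcon.1 hcon.2))
      rw [Set.disjoint_left]
      rintro ⟨x, y⟩ hzp hzq
      obtain ⟨hxp, hyp⟩ := hzp
      obtain ⟨hxq, hyq⟩ := hzq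
      rcases hne with hne | hne
      · exact (Set.disjoint_left.1 (hPdisj k q.1.1 q'.1.1 hne)) hxp hxq
      · exact (Set.disjoint_left.1 (hPdisj k q.1.2 q'.1.2 hne)) hyp hyq
    · intro q
      exact hplan k q.1.1 q.1.2 q.2.1 q.2.2

/-- `TC(X) ≤ 2·cat(X) − 1` for a path-connected normal space `X`
(non-normalized conventions). -/
theorem TC_le_two_cat_sub_one (X : Type u) [TopologicalSpace X]
    [PathConnectedSpace X] [NormalSpace X] :
    topologicalComplexity X ≤ 2 * LScat X - 1 := by
  haveI : Nonempty X := PathConnectedSpace.nonempty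
  unfold topologicalComplexity LScat
  by_cases hcat : {n | catCover X n}.Nonempty
  · have hmem : catCover X (sInf {n | catCover X n}) := Nat.sInf_mem hcat
    exact Nat.sInf_le (catCover_to_tcCover hmem)
  · have hTCempty : {n | TCCover X n} = ∅ := by
      ext m
      simp only [mem_setOf_eq, mem_empty_iff_false, iff_false]
      intro hm
      exact hcat ⟨m, tcCover_catCover hm⟩
    rw [hTCempty, Nat.sInf_empty]
    exact Nat.zero_le _
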